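/- Let U : Ω₁ × Ω₂ → [0,1] be a measurable function on a product of probability spaces, and let n, m ∈ ℕ. Then ∫_{x_1,…,x_n} ∫_{y_1,…,y_m} ∏_{i∈[n], j∈[m]} U(x_i, y_j) ≥ (∫∫ U)^{nm}, where all integrals are with respect to the product probability measures. -/

import Mathlib

open MeasureTheory

private lemma integrable_of_bounded01 {Ω : Type*} [MeasurableSpace Ω] {μ : Measure Ω}
    [IsFiniteMeasure μ] {f : Ω → ℝ} (hf : AEStronglyMeasurable f μ)
    (h0 : ∀ x, 0 ≤ f x) (h1 : ∀ x, f x ≤ 1) : Integrable f μ := by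
  refine Integrable.mono' (integrable_const 1) hf ?_
  filter_upwards with x
  rw [Real.norm_eq_abs, abs_of_nonneg (h0 x)]
  exact h1 x

private lemma jensen_pow {Ω : Type*} [MeasurableSpace Ω] (μ : Measure Ω)
    [IsProbabilityMeasure μ] {f : Ω → ℝ} (hf : AEStronglyMeasurable f μ)
    (h0 : ∀ x, 0 ≤ f x) (h1 : ∀ x, f x ≤ 1) (k : ℕ) :
    (∫ x, f x ∂μ) ^ k ≤ ∫ x, f x ^ k ∂μ := by
  have hfi : Integrable f μ := integrable_of_bounded01 hf h0 h1
  have hgi : Integrable (fun x => f x ^ k) μ := by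
    refine integrable_of_bounded01 (hf.pow _) (fun x => pow_nonneg (h0 x) _)
      (fun x => pow_le_one₀ (h0 x) (h1 x))
  have := (convexOn_pow (𝕜 := ℝ) k).map_integral_le (μ := μ) (f := f)
    ((continuous_pow k).continuousOn) isClosed_Ici
    (Filter.Eventually.of_forall fun x => h0 x) hfi hgi
  simpa using this

theorem sidorenko_complete_bipartite {Ω₁ Ω₂ : Type*} [MeasurableSpace Ω₁] [MeasurableSpace Ω₂]
    (μ : Measure Ω₁) (ν : Measure Ω₂) [IsProbabilityMeasure μ] [IsProbabilityMeasure ν]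
    (U : Ω₁ → Ω₂ → ℝ) (hU : Measurable (Function.uncurry U))
    (hU0 : ∀ x y, 0 ≤ U x y) (hU1 : ∀ x y, U x y ≤ 1) (n m : ℕ) :
    (∫ x, ∫ y, U x y ∂ν ∂μ) ^ (n * m) ≤
      ∫ x : Fin n → Ω₁, ∫ y : Fin m → Ω₂, (∏ i, ∏ j, U (x i) (y j))
        ∂(Measure.pi fun _ => ν) ∂(Measure.pi fun _ => μ) := by
  letI : MeasureSpace Ω₁ := ⟨μ⟩
  letI : MeasureSpace Ω₂ := ⟨ν⟩
  set πμ : Measure (Fin n → Ω₁) := Measure.pi fun _ => μ with hπμ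
  set πν : Measure (Fin m → Ω₂) := Measure.pi fun _ => ν with hπν
  -- measurability of the inner product function
  have hprodmeas : Measurable fun p : (Fin n → Ω₁) × Ω₂ => ∏ i, U (p.1 i) p.2 := by
    refine Finset.measurable_prod _ fun i _ => ?_
    have : Measurable fun p : (Fin n → Ω₁) × Ω₂ => Function.uncurry U (p.1 i, p.2) :=
      hU.comp (((measurable_pi_apply i).comp measurable_fst).prodMk measurable_snd)
    exact this
  -- G x = ∫ y, ∏ i, U (x i) y
  set G : (Fin n → Ω₁) → ℝ := fun x => ∫ y, ∏ i, U (x i) y ∂ν with hG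
  have hGmeas : StronglyMeasurable G :=
    hprodmeas.stronglyMeasurable.integral_prod_right'
  have hG0 : ∀ x, 0 ≤ G x :=
    fun x => integral_nonneg fun y => Finset.prod_nonneg fun i _ => hU0 _ _
  have hG1 : ∀ x, G x ≤ 1 := by
    intro x
    calc G x ≤ ∫ _ : Ω₂, (1 : ℝ) ∂ν := by
          refine integral_mono_of_nonneg
            (Filter.Eventually.of_forall fun y => Finset.prod_nonneg fun i _ => hU0 _ _)
            (integrable_const 1) ?_
          exact Filter.Eventually.of_forall fun y =>
            Finset.prod_le_one (fun i _ => hU0 _ _) (fun i _ => hU1 _ _)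
      _ = 1 := by simp
  -- Step A: inner integral equals G x ^ m
  have hinner : ∀ x : Fin n → Ω₁,
      (∫ y : Fin m → Ω₂, ∏ i, ∏ j, U (x i) (y j) ∂πν) = G x ^ m := by
    intro x
    have h1 : (fun y : Fin m → Ω₂ => ∏ i, ∏ j, U (x i) (y j))
        = fun y => ∏ j, (∏ i, U (x i) (y j)) := by
      funext y; exact Finset.prod_comm
    rw [h1]
    have := MeasureTheory.integral_fintype_prod_eq_pow (E := Ω₂) (ι := Fin m)
      (fun z => ∏ i, U (x i) z) (μ := ν)
    simpa [hG] using this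
  have hRHS : (∫ x, ∫ y : Fin m → Ω₂, ∏ i, ∏ j, U (x i) (y j) ∂πν ∂πμ)
      = ∫ x, G x ^ m ∂πμ := by
    exact integral_congr_ae (Filter.Eventually.of_forall fun x => hinner x)
  -- Step B: Jensen over πμ
  have hJ1 : (∫ x, G x ∂πμ) ^ m ≤ ∫ x, G x ^ m ∂πμ :=
    jensen_pow πμ hGmeas.aestronglyMeasurable hG0 hG1 m
  -- Step C: compute ∫ G via Fubini
  have hIntProd : Integrable (fun p : (Fin n → Ω₁) × Ω₂ => ∏ i, U (p.1 i) p.2) (πμ.prod ν) :=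
    integrable_of_bounded01 hprodmeas.aestronglyMeasurable
      (fun p => Finset.prod_nonneg fun i _ => hU0 _ _)
      (fun p => Finset.prod_le_one (fun i _ => hU0 _ _) (fun i _ => hU1 _ _))
  have hswap : (∫ x, G x ∂πμ) = ∫ y, ∫ x, ∏ i, U (x i) y ∂πμ ∂ν :=
    integral_integral_swap hIntProd
  have hF : ∀ y : Ω₂, (∫ x, ∏ i, U (x i) y ∂πμ) = (∫ x, U x y ∂μ) ^ n := by
    intro y
    have := MeasureTheory.integral_fintype_prod_eq_pow (E := Ω₁) (ι := Fin n)
      (fun z => U z y) (μ := μ)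
    simpa using this
  have hGint : (∫ x, G x ∂πμ) = ∫ y, (∫ x, U x y ∂μ) ^ n ∂ν := by
    rw [hswap]
    exact integral_congr_ae (Filter.Eventually.of_forall fun y => hF y)
  -- Step D: Jensen over ν
  have hFmeas : StronglyMeasurable fun y => ∫ x, U x y ∂μ :=
    hU.stronglyMeasurable.integral_prod_left'
  have hF0 : ∀ y, 0 ≤ ∫ x, U x y ∂μ := fun y => integral_nonneg fun x => hU0 x y
  have hF1 : ∀ y, (∫ x, U x y ∂μ) ≤ 1 := by
    intro y
    calc (∫ x, U x y ∂μ) ≤ ∫ _ : Ω₁, (1 : ℝ) ∂μ :=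
          integral_mono_of_nonneg (Filter.Eventually.of_forall fun x => hU0 x y)
            (integrable_const 1) (Filter.Eventually.of_forall fun x => hU1 x y)
      _ = 1 := by simp
  have hJ2 : (∫ y, ∫ x, U x y ∂μ ∂ν) ^ n ≤ ∫ y, (∫ x, U x y ∂μ) ^ n ∂ν :=
    jensen_pow ν hFmeas.aestronglyMeasurable hF0 hF1 n
  -- Step E: swap the outer integral in LHS
  have hIntU : Integrable (Function.uncurry U) (μ.prod ν) :=
    integrable_of_bounded01 hU.aestronglyMeasurable
      (fun p => hU0 p.1 p.2) (fun p => hU1 p.1 p.2)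
  have hLHS : (∫ x, ∫ y, U x y ∂ν ∂μ) = ∫ y, ∫ x, U x y ∂μ ∂ν :=
    integral_integral_swap hIntU
  -- combine
  rw [hRHS, hLHS, pow_mul]
  calc ((∫ y, ∫ x, U x y ∂μ ∂ν) ^ n) ^ m
      ≤ (∫ y, (∫ x, U x y ∂μ) ^ n ∂ν) ^ m := by
        refine pow_le_pow_left₀ (pow_nonneg ?_ _) hJ2 m
        exact integral_nonneg fun y => hF0 y
    _ = (∫ x, G x ∂πμ) ^ m := by rw [hGint]
    _ ≤ ∫ x, G x ^ m ∂πμ := hJ1
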